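/- For $p > 0$, $A, C > 0$ and fixed points $A_0, C_0 > 0$, the function $\log_2(1 + \frac{p}{AC})$ is bounded below by $\log_2(1 + \frac{p}{A_0 C_0}) - \frac{p \log_2 e \,(A - A_0)}{p A_0 + A_0^2 C_0} - \frac{p \log_2 e \,(C - C_0)}{p C_0 + C_0^2 A_0}$. -/
import Mathlib


theorem sca_lower_bound_rate (p A C A0 C0 : ℝ)
    (hp : 0 < p) (hA : 0 < A) (hC : 0 < C) (hA0 : 0 < A0) (hC0 : 0 < C0) :
    Real.logb 2 (1 + p / (A0 * C0))
      - p * Real.logb 2 (Real.exp 1) * (A - A0) / (p * A0 + A0 ^ 2 * C0)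
      - p * Real.logb 2 (Real.exp 1) * (C - C0) / (p * C0 + C0 ^ 2 * A0)
      ≤ Real.logb 2 (1 + p / (A * C)) := by
  have hu : 0 < A * C := mul_pos hA hC
  have hu0 : 0 < A0 * C0 := mul_pos hA0 hC0
  have hup : 0 < A0 * C0 + p := by linarith
  set l : ℝ := p / (A0 * C0 + p) with hl
  have hl0 : 0 ≤ l := le_of_lt (div_pos hp hup)
  have hl1 : 0 ≤ 1 - l := by
    have : l ≤ 1 := (div_le_one hup).mpr (by linarith)
    linarith
  have ha : 0 < A0 * C0 / (A * C) := div_pos hu0 hu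
  -- weighted AM-GM
  have hgm := Real.geom_mean_le_arith_mean2_weighted hl0 hl1 ha.le zero_le_one
      (by ring)
  rw [Real.one_rpow, mul_one, mul_one] at hgm
  -- multiplicative tangent bound
  have hkey : (1 + p / (A0 * C0)) * (A0 * C0 / (A * C)) ^ l ≤ 1 + p / (A * C) := by
    have h2 : (1 + p / (A0 * C0)) * (l * (A0 * C0 / (A * C)) + (1 - l))
        = 1 + p / (A * C) := by
      rw [hl]; field_simp; ring
    calc (1 + p / (A0 * C0)) * (A0 * C0 / (A * C)) ^ l
        ≤ (1 + p / (A0 * C0)) * (l * (A0 * C0 / (A * C)) + (1 - l)) := by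
          apply mul_le_mul_of_nonneg_left hgm
          positivity
      _ = 1 + p / (A * C) := h2
  -- log of the tangent bound
  have hpos1 : 0 < 1 + p / (A0 * C0) := by positivity
  have hpos2 : 0 < 1 + p / (A * C) := by positivity
  have hlog : Real.log (1 + p / (A0 * C0)) + l * (Real.log (A0 * C0) - Real.log (A * C))
      ≤ Real.log (1 + p / (A * C)) := by
    have h3 : Real.log ((1 + p / (A0 * C0)) * (A0 * C0 / (A * C)) ^ l)
        ≤ Real.log (1 + p / (A * C)) :=
      Real.log_le_log (by positivity) hkey
    rwa [Real.log_mul (ne_of_gt hpos1) (by positivity), Real.log_rpow ha,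
      Real.log_div (ne_of_gt hu0) (ne_of_gt hu)] at h3
  -- linearization: log x ≤ x - 1
  have hlinA : Real.log A - Real.log A0 ≤ (A - A0) / A0 := by
    have := Real.log_le_sub_one_of_pos (div_pos hA hA0)
    rwa [Real.log_div (ne_of_gt hA) (ne_of_gt hA0), div_sub_one (ne_of_gt hA0)] at this
  have hlinC : Real.log C - Real.log C0 ≤ (C - C0) / C0 := by
    have := Real.log_le_sub_one_of_pos (div_pos hC hC0)
    rwa [Real.log_div (ne_of_gt hC) (ne_of_gt hC0), div_sub_one (ne_of_gt hC0)] at this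
  -- key natural-log inequality
  have hK : Real.log (1 + p / (A0 * C0)) - p * (A - A0) / (A0 * (A0 * C0 + p))
      - p * (C - C0) / (C0 * (A0 * C0 + p)) ≤ Real.log (1 + p / (A * C)) := by
    have e1 : l * ((A - A0) / A0) = p * (A - A0) / (A0 * (A0 * C0 + p)) := by
      rw [hl, div_mul_div_comm, mul_comm (A0 * C0 + p) A0]
    have e2 : l * ((C - C0) / C0) = p * (C - C0) / (C0 * (A0 * C0 + p)) := by
      rw [hl, div_mul_div_comm, mul_comm (A0 * C0 + p) C0]
    have hA' : l * (Real.log A - Real.log A0) ≤ l * ((A - A0) / A0) :=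
      mul_le_mul_of_nonneg_left hlinA hl0
    have hC' : l * (Real.log C - Real.log C0) ≤ l * ((C - C0) / C0) :=
      mul_le_mul_of_nonneg_left hlinC hl0
    have hsplit : Real.log (A0 * C0) - Real.log (A * C)
        = (Real.log A0 - Real.log A) + (Real.log C0 - Real.log C) := by
      rw [Real.log_mul (ne_of_gt hA0) (ne_of_gt hC0),
        Real.log_mul (ne_of_gt hA) (ne_of_gt hC)]; ring
    rw [← e1, ← e2]
    nlinarith [hlog, hA', hC', hsplit]
  -- convert to logb
  have hl2 : 0 < Real.log 2 := Real.log_pos (by norm_num)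
  simp only [Real.logb, Real.log_exp]
  have heq : Real.log (1 + p / (A0 * C0)) / Real.log 2
      - p * (1 / Real.log 2) * (A - A0) / (p * A0 + A0 ^ 2 * C0)
      - p * (1 / Real.log 2) * (C - C0) / (p * C0 + C0 ^ 2 * A0)
      = (Real.log (1 + p / (A0 * C0)) - p * (A - A0) / (A0 * (A0 * C0 + p))
        - p * (C - C0) / (C0 * (A0 * C0 + p))) / Real.log 2 := by
    field_simp
    ring
  rw [heq]
  exact div_le_div_of_nonneg_right hK hl2.le
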